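/- In the utilitarian-plus-proportionality hardness reduction, the welfare structure is as claimed: in the constructed instance I' with 2n agents, 2n timesteps, and projects P ∪ {q_1,…,q_{n+1}}, every project p ∈ P receives exactly n approvals at each timestep t ≤ ℓ, each q_j (j ≤ n+1) receives at most 1 approval at each timestep t ≤ ℓ, and at each timestep t > ℓ the project q_{n+1} receives exactly n approvals while every other project receives at most 1; consequently, an outcome maximizes utilitarian welfare iff it selects a member of P at each t ≤ ℓ and q_{n+1} at each t > ℓ. -/
import Mathlib

open Finset in
lemma card_filter_fin_val (m : ℕ) (q : ℕ → Prop) [DecidablePred q] :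
    ((univ : Finset (Fin m)).filter (fun i => q i.val)).card
      = ((Finset.range m).filter q).card := by
  apply Finset.card_bij (fun i _ => i.val)
  · intro a ha
    simp only [Finset.mem_filter, Finset.mem_univ, true_and] at ha
    simp [Finset.mem_filter, Finset.mem_range, a.isLt, ha]
  · intro a _ b _ h; exact Fin.ext h
  · intro b hb
    simp only [Finset.mem_filter, Finset.mem_range] at hb
    exact ⟨⟨b, hb.1⟩, by simp [hb.2], rfl⟩

open Finset in
lemma range_filter_interval (m a b : ℕ) (hb : b ≤ m) :
    ((Finset.range m).filter (fun x => a ≤ x ∧ x < b)) = Finset.Ico a b := by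
  ext x
  simp only [Finset.mem_filter, Finset.mem_range, Finset.mem_Ico]
  omega

open Finset in
lemma card_fin_interval (m a b : ℕ) (hb : b ≤ m) :
    ((univ : Finset (Fin m)).filter (fun i : Fin m => a ≤ (i : ℕ) ∧ (i : ℕ) < b)).card
      = b - a := by
  rw [card_filter_fin_val m (fun x : ℕ => a ≤ x ∧ x < b), range_filter_interval m a b hb,
    Nat.card_Ico]



/-- The utility of agent `i` under outcome `o`. -/
noncomputable def util {P : Type*} {n ℓ : ℕ}
    (S : Fin n → Fin ℓ → Finset P) (i : Fin n) (o : Fin ℓ → P) : ℕ :=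
  Nat.card {t : Fin ℓ // o t ∈ S i t}

/-- Welfare structure of the instance `I'` in the Util-plus-PROP hardness
reduction. Starting from an instance `I` with `n` agents, `ℓ < n` timesteps,
complete preferences, and approval counts `napp p t`, the instance `I'` has `2n`
agents, `2n` timesteps and projects `P ⊕ Fin (n+1)` (with `Sum.inr j` playing
the role of `q_{j+1}`, so `Sum.inr n = q_{n+1}`). Then: (1) at each timestep
`t < ℓ`, each `p ∈ P` is approved by exactly `n` agents; (2) each `q_j` is
approved by at most one agent at each `t < ℓ`; (3) at each `t ≥ ℓ`, `q_{n+1}` is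
approved by exactly `n` agents and every other project by at most one; (4) hence
an outcome maximizes utilitarian welfare iff it selects a member of `P` at every
`t < ℓ` and `q_{n+1}` at every `t ≥ ℓ`. -/
theorem util_prop_reduction_structure {P : Type*} [Fintype P] [DecidableEq P]
    (n ℓ : ℕ) (hℓ : 1 ≤ ℓ) (hn : ℓ < n)
    (S : Fin n → Fin ℓ → Finset P) (hCP : ∀ i t, S i t ≠ ∅)
    (napp : P → Fin ℓ → ℕ)
    (hnapp : ∀ p t, napp p t = Nat.card {i : Fin n // p ∈ S i t})
    (S' : Fin (2 * n) → Fin (2 * n) → Finset (P ⊕ Fin (n + 1)))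
    (hS' : ∀ (i : Fin (2 * n)) (t : Fin (2 * n)), S' i t =
      if ht : (t : ℕ) < ℓ then
        (if hi : (i : ℕ) < n then
          (S ⟨(i : ℕ), hi⟩ ⟨(t : ℕ), ht⟩).image Sum.inl
        else
          insert (Sum.inr ⟨(i : ℕ) - n, by have := i.isLt; omega⟩)
            ((Finset.univ.filter
              (fun p => napp p ⟨(t : ℕ), ht⟩ ≤ 2 * n - 1 - (i : ℕ))).image Sum.inl))
      else
        (if hi : (i : ℕ) < n then {Sum.inr ⟨(i : ℕ), by omega⟩}
         else {Sum.inr ⟨n, by omega⟩})) :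
    (∀ (p : P) (t : Fin (2 * n)), (t : ℕ) < ℓ →
      Nat.card {i : Fin (2 * n) // Sum.inl p ∈ S' i t} = n) ∧
    (∀ (j : Fin (n + 1)) (t : Fin (2 * n)), (t : ℕ) < ℓ →
      Nat.card {i : Fin (2 * n) // Sum.inr j ∈ S' i t} ≤ 1) ∧
    (∀ t : Fin (2 * n), ℓ ≤ (t : ℕ) →
      (Nat.card {i : Fin (2 * n) // Sum.inr (⟨n, by omega⟩ : Fin (n + 1)) ∈ S' i t} = n ∧
       ∀ p' : P ⊕ Fin (n + 1), p' ≠ Sum.inr (⟨n, by omega⟩ : Fin (n + 1)) →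
        Nat.card {i : Fin (2 * n) // p' ∈ S' i t} ≤ 1)) ∧
    (∀ o' : Fin (2 * n) → (P ⊕ Fin (n + 1)),
      ((∀ o'' : Fin (2 * n) → (P ⊕ Fin (n + 1)),
          ∑ i : Fin (2 * n), util S' i o'' ≤ ∑ i : Fin (2 * n), util S' i o') ↔
        (∀ t : Fin (2 * n),
          ((t : ℕ) < ℓ → ∃ p : P, o' t = Sum.inl p) ∧
          (ℓ ≤ (t : ℕ) → o' t = Sum.inr (⟨n, by omega⟩ : Fin (n + 1)))))) := by
  classical
  have hn2 : 2 ≤ n := by omega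
  -- membership characterizations
  have hm1 : ∀ (i t : Fin (2*n)) (ht : (t:ℕ) < ℓ) (hi : (i:ℕ) < n) (p : P),
      (Sum.inl p ∈ S' i t ↔ p ∈ S ⟨(i:ℕ), hi⟩ ⟨(t:ℕ), ht⟩) := by
    intro i t ht hi p
    rw [hS', dif_pos ht, dif_pos hi]
    simp
  have hm2 : ∀ (i t : Fin (2*n)) (ht : (t:ℕ) < ℓ) (hi : ¬ (i:ℕ) < n) (p : P),
      (Sum.inl p ∈ S' i t ↔ napp p ⟨(t:ℕ), ht⟩ ≤ 2*n - 1 - (i:ℕ)) := by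
    intro i t ht hi p
    rw [hS', dif_pos ht, dif_neg hi]
    simp
  have hm3 : ∀ (i t : Fin (2*n)) (ht : (t:ℕ) < ℓ) (hi : ¬ (i:ℕ) < n) (j : Fin (n+1)),
      (Sum.inr j ∈ S' i t ↔ (j:ℕ) = (i:ℕ) - n) := by
    intro i t ht hi j
    rw [hS', dif_pos ht, dif_neg hi]
    simp [Finset.mem_insert, Fin.ext_iff]
  have hm4 : ∀ (i t : Fin (2*n)) (ht : (t:ℕ) < ℓ) (hi : (i:ℕ) < n) (j : Fin (n+1)),
      ¬ (Sum.inr j ∈ S' i t) := by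
    intro i t ht hi j
    rw [hS', dif_pos ht, dif_pos hi]
    simp
  have hm5 : ∀ (i t : Fin (2*n)) (ht : ¬ (t:ℕ) < ℓ) (hi : (i:ℕ) < n)
      (x : P ⊕ Fin (n+1)),
      (x ∈ S' i t ↔ x = Sum.inr ⟨(i:ℕ), by omega⟩) := by
    intro i t ht hi x
    rw [hS', dif_neg ht, dif_pos hi]
    simp
  have hm6 : ∀ (i t : Fin (2*n)) (ht : ¬ (t:ℕ) < ℓ) (hi : ¬ (i:ℕ) < n)
      (x : P ⊕ Fin (n+1)),
      (x ∈ S' i t ↔ x = Sum.inr ⟨n, by omega⟩) := by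
    intro i t ht hi x
    rw [hS', dif_neg ht, dif_neg hi]
    simp
  -- counting function
  set cnt : (P ⊕ Fin (n+1)) → Fin (2*n) → ℕ :=
    fun p' t => (Finset.univ.filter (fun i : Fin (2*n) => p' ∈ S' i t)).card with hcntdef
  have hcard : ∀ (p' : P ⊕ Fin (n+1)) (t : Fin (2*n)),
      Nat.card {i : Fin (2*n) // p' ∈ S' i t} = cnt p' t := by
    intro p' t
    rw [Nat.card_eq_fintype_card, Fintype.card_subtype]
  have hnapp' : ∀ (p : P) (t' : Fin ℓ),
      napp p t' = (Finset.univ.filter (fun i : Fin n => p ∈ S i t')).card := by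
    intro p t'
    rw [hnapp, Nat.card_eq_fintype_card, Fintype.card_subtype]
  have hnapp_le : ∀ (p : P) (t' : Fin ℓ), napp p t' ≤ n := by
    intro p t'
    rw [hnapp']
    calc (Finset.univ.filter (fun i : Fin n => p ∈ S i t')).card
        ≤ (Finset.univ : Finset (Fin n)).card := Finset.card_filter_le _ _
      _ = n := by simp
  -- claim 1
  have claim1 : ∀ (p : P) (t : Fin (2*n)), (t:ℕ) < ℓ → cnt (Sum.inl p) t = n := by
    intro p t ht
    have ht2 : (t:ℕ) < 2*n := t.isLt
    set t' : Fin ℓ := ⟨(t:ℕ), ht⟩ with ht'def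
    have hsplit : (Finset.univ.filter (fun i : Fin (2*n) => Sum.inl p ∈ S' i t))
        = (Finset.univ.filter (fun i : Fin (2*n) => (i:ℕ) < n ∧ Sum.inl p ∈ S' i t))
          ∪ (Finset.univ.filter
              (fun i : Fin (2*n) => n ≤ (i:ℕ) ∧ (i:ℕ) < 2*n - napp p t')) := by
      ext i
      have hi2 : (i:ℕ) < 2*n := i.isLt
      simp only [Finset.mem_union, Finset.mem_filter, Finset.mem_univ, true_and]
      by_cases hi : (i:ℕ) < n
      · constructor
        · intro h; exact Or.inl ⟨hi, h⟩
        · rintro (⟨_, h⟩ | ⟨h, _⟩)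
          · exact h
          · omega
      · rw [hm2 i t ht hi p]
        have hnn : napp p ⟨(t:ℕ), ht⟩ = napp p t' := rfl
        have := hnapp_le p t'
        constructor
        · intro h; right; constructor <;> omega
        · rintro (⟨h, _⟩ | ⟨_, h⟩)
          · omega
          · omega
    have hdisj : Disjoint
        (Finset.univ.filter (fun i : Fin (2*n) => (i:ℕ) < n ∧ Sum.inl p ∈ S' i t))
        (Finset.univ.filter
          (fun i : Fin (2*n) => n ≤ (i:ℕ) ∧ (i:ℕ) < 2*n - napp p t')) := by
      rw [Finset.disjoint_left]
      intro a ha hb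
      simp only [Finset.mem_filter, Finset.mem_univ, true_and] at ha hb
      omega
    have hcard1 : (Finset.univ.filter
        (fun i : Fin (2*n) => (i:ℕ) < n ∧ Sum.inl p ∈ S' i t)).card = napp p t' := by
      rw [hnapp']
      symm
      apply Finset.card_bij (fun (j : Fin n) _ => (⟨(j:ℕ), by omega⟩ : Fin (2*n)))
      · intro j hj
        simp only [Finset.mem_filter, Finset.mem_univ, true_and] at hj ⊢
        refine ⟨j.isLt, ?_⟩
        rw [hm1 _ t ht j.isLt p]
        convert hj using 3 <;> simp [ht'def]
      · intro a _ b _ h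
        simpa [Fin.ext_iff] using congrArg Fin.val h
      · intro b hb
        simp only [Finset.mem_filter, Finset.mem_univ, true_and] at hb
        obtain ⟨hbn, hmem⟩ := hb
        refine ⟨⟨(b:ℕ), hbn⟩, ?_, by simp [Fin.ext_iff]⟩
        simp only [Finset.mem_filter, Finset.mem_univ, true_and]
        rw [hm1 b t ht hbn p] at hmem
        convert hmem using 3 <;> simp [ht'def]
    have hcard2 : (Finset.univ.filter
        (fun i : Fin (2*n) => n ≤ (i:ℕ) ∧ (i:ℕ) < 2*n - napp p t')).card
        = n - napp p t' := by
      have := hnapp_le p t'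
      rw [card_fin_interval (2*n) n (2*n - napp p t') (by omega)]
      omega
    have := hnapp_le p t'
    simp only [hcntdef]
    rw [hsplit, Finset.card_union_of_disjoint hdisj, hcard1, hcard2]
    omega
  -- claim 2
  have claim2 : ∀ (j : Fin (n+1)) (t : Fin (2*n)), (t:ℕ) < ℓ → cnt (Sum.inr j) t ≤ 1 := by
    intro j t ht
    apply Finset.card_le_one.2
    intro a ha b hb
    simp only [hcntdef, Finset.mem_filter, Finset.mem_univ, true_and] at ha hb
    by_cases hia : (a:ℕ) < n
    · exact absurd ha (hm4 a t ht hia j)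
    by_cases hib : (b:ℕ) < n
    · exact absurd hb (hm4 b t ht hib j)
    rw [hm3 a t ht hia j] at ha
    rw [hm3 b t ht hib j] at hb
    have ha2 := a.isLt
    have hb2 := b.isLt
    apply Fin.ext
    omega
  -- claim 3
  have claim3a : ∀ t : Fin (2*n), ℓ ≤ (t:ℕ) →
      cnt (Sum.inr (⟨n, by omega⟩ : Fin (n+1))) t = n := by
    intro t ht
    have ht' : ¬ (t:ℕ) < ℓ := by omega
    have : (Finset.univ.filter
        (fun i : Fin (2*n) => Sum.inr (⟨n, by omega⟩ : Fin (n+1)) ∈ S' i t))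
        = Finset.univ.filter (fun i : Fin (2*n) => n ≤ (i:ℕ) ∧ (i:ℕ) < 2*n) := by
      ext i
      simp only [Finset.mem_filter, Finset.mem_univ, true_and]
      by_cases hi : (i:ℕ) < n
      · rw [hm5 i t ht' hi]
        simp only [Sum.inr.injEq, Fin.mk.injEq]
        constructor
        · intro h; omega
        · intro h; omega
      · rw [hm6 i t ht' hi]
        have := i.isLt
        simp only [Sum.inr.injEq, Fin.mk.injEq]
        constructor
        · intro _; omega
        · intro _; trivial
    simp only [hcntdef]
    rw [this, card_fin_interval (2*n) n (2*n) (le_refl _)]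
    omega
  have claim3b : ∀ t : Fin (2*n), ℓ ≤ (t:ℕ) →
      ∀ p' : P ⊕ Fin (n+1), p' ≠ Sum.inr (⟨n, by omega⟩ : Fin (n+1)) →
        cnt p' t ≤ 1 := by
    intro t ht p' hp'
    have ht' : ¬ (t:ℕ) < ℓ := by omega
    apply Finset.card_le_one.2
    intro a ha b hb
    simp only [hcntdef, Finset.mem_filter, Finset.mem_univ, true_and] at ha hb
    by_cases hia : (a:ℕ) < n
    · by_cases hib : (b:ℕ) < n
      · rw [hm5 a t ht' hia] at ha
        rw [hm5 b t ht' hib] at hb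
        apply Fin.ext
        rw [ha] at hb
        simpa [Fin.ext_iff] using hb
      · rw [hm6 b t ht' hib] at hb
        exact absurd hb hp'
    · rw [hm6 a t ht' hia] at ha
      exact absurd ha hp'
  -- welfare rewriting
  have hW : ∀ o : Fin (2*n) → (P ⊕ Fin (n+1)),
      ∑ i : Fin (2*n), util S' i o = ∑ t : Fin (2*n), cnt (o t) t := by
    intro o
    have h1 : ∀ i : Fin (2*n), util S' i o
        = ∑ t : Fin (2*n), if o t ∈ S' i t then 1 else 0 := by
      intro i
      rw [util, Nat.card_eq_fintype_card, Fintype.card_subtype, Finset.card_filter]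
    have h2 : ∀ t : Fin (2*n), cnt (o t) t
        = ∑ i : Fin (2*n), if o t ∈ S' i t then 1 else 0 := by
      intro t
      simp only [hcntdef]
      rw [Finset.card_filter]
    simp only [h1, h2]
    exact Finset.sum_comm
  -- uniform bound
  have hle : ∀ (p' : P ⊕ Fin (n+1)) (t : Fin (2*n)), cnt p' t ≤ n := by
    intro p' t
    by_cases ht : (t:ℕ) < ℓ
    · rcases p' with p | j
      · exact le_of_eq (claim1 p t ht)
      · exact le_trans (claim2 j t ht) (by omega)
    · by_cases hp' : p' = Sum.inr (⟨n, by omega⟩ : Fin (n+1))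
      · rw [hp']; exact le_of_eq (claim3a t (by omega))
      · exact le_trans (claim3b t (by omega) p' hp') (by omega)
  -- a project in P exists
  have hp0 : ∃ p0 : P, True := by
    have h0 : (0:ℕ) < n := by omega
    have h0' : (0:ℕ) < ℓ := hℓ
    have := hCP ⟨0, h0⟩ ⟨0, h0'⟩
    rcases Finset.nonempty_iff_ne_empty.2 this with ⟨p0, _⟩
    exact ⟨p0, trivial⟩
  obtain ⟨p0, -⟩ := hp0
  -- put together
  refine ⟨?_, ?_, ?_, ?_⟩
  · intro p t ht; rw [hcard]; exact claim1 p t ht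
  · intro j t ht; rw [hcard]; exact claim2 j t ht
  · intro t ht
    exact ⟨by rw [hcard]; exact claim3a t ht,
      fun p' hp' => by rw [hcard]; exact claim3b t ht p' hp'⟩
  · intro o'
    -- the optimal outcome
    set ostar : Fin (2*n) → (P ⊕ Fin (n+1)) :=
      fun t => if (t:ℕ) < ℓ then Sum.inl p0 else Sum.inr ⟨n, by omega⟩ with hostardef
    have hWstar : ∑ i : Fin (2*n), util S' i ostar = 2*n*n := by
      rw [hW]
      have : ∀ t : Fin (2*n), cnt (ostar t) t = n := by
        intro t
        by_cases ht : (t:ℕ) < ℓ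
        · simp only [hostardef, if_pos ht]; exact claim1 p0 t ht
        · simp only [hostardef, if_neg ht]; exact claim3a t (by omega)
      rw [Finset.sum_congr rfl (fun t _ => this t)]
      simp [mul_comm]
    constructor
    · intro hmax
      have hbig : 2*n*n ≤ ∑ t : Fin (2*n), cnt (o' t) t := by
        rw [← hW]; rw [← hWstar]; exact hmax ostar
      have hall : ∀ t : Fin (2*n), cnt (o' t) t = n := by
        by_contra hcon
        push_neg at hcon
        obtain ⟨t0, ht0⟩ := hcon
        have hlt : cnt (o' t0) t0 < n := lt_of_le_of_ne (hle _ _) ht0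
        have : ∑ t : Fin (2*n), cnt (o' t) t < ∑ _t : Fin (2*n), n :=
          Finset.sum_lt_sum (fun t _ => hle _ _) ⟨t0, Finset.mem_univ _, hlt⟩
        simp only [Finset.sum_const, Finset.card_univ, Fintype.card_fin, smul_eq_mul] at this
        omega
      intro t
      constructor
      · intro ht
        rcases hmem : o' t with p | j
        · exact ⟨p, rfl⟩
        · exfalso
          have := claim2 j t ht
          have h2 := hall t
          rw [hmem] at h2
          omega
      · intro ht
        by_contra hne
        have := claim3b t ht (o' t) hne
        have h2 := hall t
        omega
    · intro hsel o''
      rw [hW, hW]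
      have h1 : ∑ t : Fin (2*n), cnt (o'' t) t ≤ ∑ _t : Fin (2*n), n :=
        Finset.sum_le_sum (fun t _ => hle _ _)
      have h2 : ∀ t : Fin (2*n), cnt (o' t) t = n := by
        intro t
        by_cases ht : (t:ℕ) < ℓ
        · obtain ⟨p, hp⟩ := (hsel t).1 ht
          rw [hp]; exact claim1 p t ht
        · rw [(hsel t).2 (by omega)]; exact claim3a t (by omega)
      rw [Finset.sum_congr rfl (fun t _ => h2 t)]
      exact h1
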